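/- Let d ≥ 1 and let n ∈ (0, 1), ρ^{sR} > 0, ρ^{wR} > 0, Δt > 0 be constants. Set ρ^s := (1 − n) ρ^{sR} and ρ^w := n ρ^{wR}. Let v^*_s, v^*_w, v^{t+1}_s, v^{t+1}_w : ℝ^d → ℝ^d be differentiable vector fields and let Δp : ℝ^d → ℝ be twice continuously differentiable. Assume that at every point: (i) the solid-phase pressure-correction equation ρ^s (v^{t+1}_s − v^*_s)/Δt = −(1 − n) ∇Δp holds; (ii) the water-phase pressure-correction equation ρ^w (v^{t+1}_w − v^*_w)/Δt = −n ∇Δp holds; (iii) the incompressibility condition n · div v^{t+1}_w + (1 − n) · div v^{t+1}_s = 0 holds. Then at every point, n · div v^*_w + (1 − n) · div v^*_s = Δt · ( (1 − n)/ρ^{sR} + n/ρ^{wR} ) · ∇²Δp, where ∇²Δp is the Laplacian of Δp. -/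

import Mathlib

/-- The divergence of a vector field `v : ℝ^d → ℝ^d` at `x`:
the trace of the Fréchet derivative of `v` at `x`. -/
noncomputable def vdiv {d : ℕ} (v : EuclideanSpace ℝ (Fin d) → EuclideanSpace ℝ (Fin d))
    (x : EuclideanSpace ℝ (Fin d)) : ℝ :=
  LinearMap.trace ℝ (EuclideanSpace ℝ (Fin d)) (fderiv ℝ v x).toLinearMap

lemma vdiv_add_smul {d : ℕ} (v w : EuclideanSpace ℝ (Fin d) → EuclideanSpace ℝ (Fin d))
    (c : ℝ) (x : EuclideanSpace ℝ (Fin d)) (hv : DifferentiableAt ℝ v x)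
    (hw : DifferentiableAt ℝ w x) :
    vdiv (fun y => v y + c • w y) x = vdiv v x + c * vdiv w x := by
  have h1 : fderiv ℝ (fun y => v y + c • w y) x = fderiv ℝ v x + c • fderiv ℝ w x := by
    rw [fderiv_fun_add hv (hw.fun_const_smul c), fderiv_fun_const_smul hw]
  unfold vdiv
  rw [h1]
  simp [LinearMap.trace]

/-- Mass-conservation defect of the intermediate velocities in Chorin's
projection method for the two-phase MPM: from the solid- and water-phase
pressure-correction equations and incompressibility of the final velocities,
`n ∇·v*_w + (1−n) ∇·v*_s = Δt ( (1−n)/ρ^{sR} + n/ρ^{wR} ) ∇²Δp` everywhere,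
where `∇²Δp = ∇·(∇Δp)` is the Laplacian of the pressure increment. -/
theorem intermediate_mass_conservation_defect {d : ℕ} (hd : 1 ≤ d)
    (n ρsR ρwR Δt : ℝ)
    (hn : n ∈ Set.Ioo (0 : ℝ) 1) (hρsR : 0 < ρsR) (hρwR : 0 < ρwR)
    (hΔt : 0 < Δt)
    (ρs ρw : ℝ) (hρs : ρs = (1 - n) * ρsR) (hρw : ρw = n * ρwR)
    (vss vsw vt1s vt1w : EuclideanSpace ℝ (Fin d) → EuclideanSpace ℝ (Fin d))
    (hvss : Differentiable ℝ vss) (hvsw : Differentiable ℝ vsw)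
    (hvt1s : Differentiable ℝ vt1s) (hvt1w : Differentiable ℝ vt1w)
    (Δp : EuclideanSpace ℝ (Fin d) → ℝ) (hΔp : ContDiff ℝ 2 Δp)
    (hsolid : ∀ x, (ρs / Δt) • (vt1s x - vss x) = -((1 - n) • gradient Δp x))
    (hwater : ∀ x, (ρw / Δt) • (vt1w x - vsw x) = -(n • gradient Δp x))
    (hincomp : ∀ x, n * vdiv vt1w x + (1 - n) * vdiv vt1s x = 0) :
    ∀ x, n * vdiv vsw x + (1 - n) * vdiv vss x
      = Δt * ((1 - n) / ρsR + n / ρwR) * vdiv (fun y => gradient Δp y) x := by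
  intro x
  obtain ⟨hn0, hn1⟩ := hn
  have hns : (0:ℝ) < 1 - n := by linarith
  have hρs0 : (0:ℝ) < ρs := by rw [hρs]; positivity
  have hρw0 : (0:ℝ) < ρw := by rw [hρw]; positivity
  have hg : Differentiable ℝ (fun y => gradient Δp y) := by
    have h1 : ContDiff ℝ 1 (fderiv ℝ Δp) := hΔp.fderiv_right (by norm_num)
    have := (InnerProductSpace.toDual ℝ (EuclideanSpace ℝ (Fin d))).symm.differentiable.comp
      (h1.differentiable one_ne_zero)
    exact this
  -- solve pressure-correction equations for the intermediate velocities
  have hss : vss = fun y => vt1s y + ((1 - n) * Δt / ρs) • gradient Δp y := by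
    funext y
    have h := hsolid y
    have h2 : vt1s y - vss y = -(((1 - n) * Δt / ρs) • gradient Δp y) := by
      have ha : ρs / Δt ≠ 0 := by positivity
      have h5 : vt1s y - vss y = (ρs / Δt)⁻¹ • -((1 - n) • gradient Δp y) := by
        rw [← h, inv_smul_smul₀ ha]
      rw [h5]
      match_scalars
      field_simp
      try ring
      try exact Or.inl trivial
      try exact Or.inl (by ring)
    have : vss y = vt1s y + ((1 - n) * Δt / ρs) • gradient Δp y := by
      have := sub_eq_iff_eq_add.mp h2
      linear_combination (norm := module) -this
    exact this
  have hsw : vsw = fun y => vt1w y + (n * Δt / ρw) • gradient Δp y := by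
    funext y
    have h := hwater y
    have h2 : vt1w y - vsw y = -((n * Δt / ρw) • gradient Δp y) := by
      have ha : ρw / Δt ≠ 0 := by positivity
      have h5 : vt1w y - vsw y = (ρw / Δt)⁻¹ • -(n • gradient Δp y) := by
        rw [← h, inv_smul_smul₀ ha]
      rw [h5]
      match_scalars
      field_simp
      try ring
      try exact Or.inl trivial
      try exact Or.inl (by ring)
    have : vsw y = vt1w y + (n * Δt / ρw) • gradient Δp y := by
      have := sub_eq_iff_eq_add.mp h2
      linear_combination (norm := module) -this
    exact this
  have dss : vdiv vss x = vdiv vt1s x + ((1 - n) * Δt / ρs) * vdiv (fun y => gradient Δp y) x := by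
    rw [hss]; exact vdiv_add_smul _ _ _ x (hvt1s x) (hg x)
  have dsw : vdiv vsw x = vdiv vt1w x + (n * Δt / ρw) * vdiv (fun y => gradient Δp y) x := by
    rw [hsw]; exact vdiv_add_smul _ _ _ x (hvt1w x) (hg x)
  have hi := hincomp x
  rw [dss, dsw]
  have hc : n * (n * Δt / ρw) + (1 - n) * ((1 - n) * Δt / ρs)
      = Δt * ((1 - n) / ρsR + n / ρwR) := by
    rw [hρs, hρw]
    field_simp
    ring
  linear_combination hi + vdiv (fun y => gradient Δp y) x * hc
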